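/- arXiv:2502.03613 — 2 statements merged into one kernel-verified Lean document; each statement's English description precedes it below -/
import Mathlib

section
/- Let p and ℓ be primes with p > ℓ and p ≡ 1 (mod 4). If a, b are integers with b ≠ 0 and a² + b²p = ℓ², then 2ℓ - p is a perfect square; more precisely, |a| = p - ℓ and b² = 2ℓ - p. -/
/-- If `p > ℓ` are primes with `p ≡ 1 (mod 4)` and `a² + b²p = ℓ²` with `b ≠ 0`,
then `|a| = p - ℓ` and `b² = 2ℓ - p` (so `2ℓ - p` is a perfect square). -/
theorem stmt_5 (p ℓ : ℕ) (hp : p.Prime) (hℓ : ℓ.Prime) (hgt : ℓ < p)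
    (hmod : p % 4 = 1) (a b : ℤ) (hb : b ≠ 0)
    (hnorm : a ^ 2 + b ^ 2 * (p : ℤ) = (ℓ : ℤ) ^ 2) :
    |a| = (p : ℤ) - (ℓ : ℤ) ∧ b ^ 2 = 2 * (ℓ : ℤ) - (p : ℤ) := by
  have hp0 : (0:ℤ) < (p:ℤ) := by exact_mod_cast hp.pos
  have hℓ0 : (0:ℤ) < (ℓ:ℤ) := by exact_mod_cast hℓ.pos
  have hgt' : (ℓ:ℤ) < (p:ℤ) := by exact_mod_cast hgt
  have hb2 : (1:ℤ) ≤ b ^ 2 := by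
    have h0 : 0 < b ^ 2 := by positivity
    linarith [Int.lt_iff_add_one_le.mp h0]
  have ha2 : a ^ 2 ≤ (ℓ:ℤ) ^ 2 - (p:ℤ) := by nlinarith
  have haltℓ : a < (ℓ:ℤ) := by nlinarith
  have hagt : -(ℓ:ℤ) < a := by nlinarith
  have hdvd : (p:ℤ) ∣ ((ℓ:ℤ) - a) * ((ℓ:ℤ) + a) := ⟨b ^ 2, by linear_combination -hnorm⟩
  have hpp : Prime ((p:ℤ)) := Nat.prime_iff_prime_int.mp hp
  rcases hpp.dvd_mul.mp hdvd with h | h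
  · -- p ∣ ℓ - a, with 0 < ℓ - a < 2p, so ℓ - a = p, a = ℓ - p
    obtain ⟨k, hk⟩ := h
    have hkpos : 0 < k := by nlinarith
    have hk1 : k = 1 := by nlinarith
    have ha : a = (ℓ:ℤ) - (p:ℤ) := by rw [hk1] at hk; linarith
    have habs : |a| = (p:ℤ) - (ℓ:ℤ) := by
      rw [ha, abs_of_nonpos (by linarith)]; ring
    refine ⟨habs, ?_⟩
    have hmul : b ^ 2 * (p:ℤ) = (2 * (ℓ:ℤ) - (p:ℤ)) * (p:ℤ) := by
      rw [ha] at hnorm; linear_combination hnorm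
    exact mul_right_cancel₀ hp0.ne' hmul
  · -- p ∣ ℓ + a, with 0 < ℓ + a < 2p, so ℓ + a = p, a = p - ℓ
    obtain ⟨k, hk⟩ := h
    have hkpos : 0 < k := by nlinarith
    have hk1 : k = 1 := by nlinarith
    have ha : a = (p:ℤ) - (ℓ:ℤ) := by rw [hk1] at hk; linarith
    have habs : |a| = (p:ℤ) - (ℓ:ℤ) := by
      rw [ha, abs_of_nonneg (by linarith)]
    refine ⟨habs, ?_⟩
    have hmul : b ^ 2 * (p:ℤ) = (2 * (ℓ:ℤ) - (p:ℤ)) * (p:ℤ) := by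
      rw [ha] at hnorm; linear_combination hnorm
    exact mul_right_cancel₀ hp0.ne' hmul
end

section
/- Over Z, the resultant of Φ₂(X,Y) and ∂Φ₂/∂Y(X,Y) with respect to Y equals -4X²(X - 1728)(X + 3375)²(X² + 191025X - 121287375)². -/
open Polynomial

/-- The Sylvester matrix of `f` (viewed with degree `m`) and `g` (viewed with
degree `n`): the first `n` rows are shifts of the coefficients of `f`, the last
`m` rows are shifts of the coefficients of `g`. -/
noncomputable def sylvesterMatrix {R : Type*} [CommRing R] (m n : ℕ)
    (f g : R[X]) : Matrix (Fin (n + m)) (Fin (n + m)) R :=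
  Matrix.of fun i j =>
    if (i : ℕ) < n then
      if (i : ℕ) ≤ (j : ℕ) ∧ (j : ℕ) ≤ (i : ℕ) + m then
        f.coeff (m - ((j : ℕ) - (i : ℕ)))
      else 0
    else
      if (i : ℕ) - n ≤ (j : ℕ) ∧ (j : ℕ) ≤ (i : ℕ) - n + n then
        g.coeff (n - ((j : ℕ) - ((i : ℕ) - n)))
      else 0

/-- The resultant of two polynomials, as the determinant of their Sylvester
matrix. -/
noncomputable def resultant {R : Type*} [CommRing R] (f g : R[X]) : R :=
  (sylvesterMatrix f.natDegree g.natDegree f g).det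

/-- The level 2 modular polynomial `Φ₂(X,Y)`, viewed as a polynomial in `Y`
with coefficients in `ℤ[X]` (the outer variable is `Y`). -/
noncomputable def Phi2 : (Polynomial ℤ)[X] :=
  let x : (Polynomial ℤ)[X] := C X
  let y : (Polynomial ℤ)[X] := X
  x ^ 3 + y ^ 3 - x ^ 2 * y ^ 2 + 1488 * (x ^ 2 * y + x * y ^ 2)
    - 162000 * (x ^ 2 + y ^ 2) + 40773375 * (x * y)
    + 8748000000 * (x + y) - 157464000000000

/-- coefficients of Φ₂ in the outer variable -/
noncomputable def p0 : ℤ[X] := X^3 - 162000*X^2 + 8748000000*X - 157464000000000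
noncomputable def p1 : ℤ[X] := 1488*X^2 + 40773375*X + 8748000000
noncomputable def p2 : ℤ[X] := -X^2 + 1488*X - 162000

lemma Phi2_eq : Phi2 = C p0 + C p1 * X + C p2 * X^2 + X^3 := by
  simp only [Phi2, p0, p1, p2, map_add, map_sub, map_mul, map_pow, map_ofNat, map_neg]
  ring

lemma Phi2_natDegree : Phi2.natDegree = 3 := by
  rw [Phi2_eq]; compute_degree!

lemma deriv_Phi2 : derivative Phi2 = C p1 + C 2 * C p2 * X + C 3 * X^2 := by
  rw [Phi2_eq]
  simp only [derivative_add, derivative_C_mul, derivative_C, derivative_X_pow,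
    derivative_X, map_mul]
  simp only [map_ofNat, map_natCast, map_mul]
  ring

lemma deriv_Phi2_natDegree : (derivative Phi2).natDegree = 2 := by
  rw [deriv_Phi2]; compute_degree!


set_option maxHeartbeats 1000000 in
lemma det5 (a b c : ℤ[X]) :
    (!![1, c, b, a, 0;
        0, 1, c, b, a;
        3, 2*c, b, 0, 0;
        0, 3, 2*c, b, 0;
        0, 0, 3, 2*c, b] : Matrix (Fin 5) (Fin 5) ℤ[X]).det
      = 27*a^2 + 4*a*c^3 - b^2*c^2 + 4*b^3 - 18*a*b*c := by
  simp [Matrix.det_succ_row_zero, Fin.sum_univ_succ, Fin.succAbove]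
  ring

set_option maxHeartbeats 2000000 in
/-- `Res(Φ₂, ∂Φ₂/∂Y; Y) = -4X²(X - 1728)(X + 3375)²(X² + 191025X - 121287375)²`
in `ℤ[X]`. -/
theorem stmt_10 :
    _root_.resultant Phi2 (derivative Phi2)
      = -4 * X ^ 2 * (X - 1728) * (X + 3375) ^ 2
          * (X ^ 2 + 191025 * X - 121287375) ^ 2 := by
  have hf0 : Phi2.coeff 0 = p0 := by rw [Phi2_eq]; simp [coeff_add, coeff_C, coeff_C_mul, coeff_X_pow]
  have hf1 : Phi2.coeff 1 = p1 := by rw [Phi2_eq]; simp [coeff_add, coeff_C, coeff_C_mul, coeff_X_pow]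
  have hf2 : Phi2.coeff 2 = p2 := by rw [Phi2_eq]; simp [coeff_add, coeff_C, coeff_C_mul, coeff_X_pow]
  have hf3 : Phi2.coeff 3 = 1 := by rw [Phi2_eq]; simp [coeff_add, coeff_C, coeff_C_mul, coeff_X_pow]
  have hg0 : (derivative Phi2).coeff 0 = p1 := by
    rw [deriv_Phi2]; simp [coeff_add, coeff_C, coeff_C_mul, coeff_X_pow]
  have hg1 : (derivative Phi2).coeff 1 = 2*p2 := by
    rw [deriv_Phi2]; simp [coeff_add, coeff_C, coeff_C_mul, coeff_X_pow]
  have hg2 : (derivative Phi2).coeff 2 = 3 := by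
    rw [deriv_Phi2]; simp [coeff_add, coeff_C, coeff_C_mul, coeff_X_pow]
  rw [_root_.resultant, Phi2_natDegree, deriv_Phi2_natDegree]
  have hM : sylvesterMatrix 3 2 Phi2 (derivative Phi2)
      = !![1, p2, p1, p0, 0;
           0, 1, p2, p1, p0;
           3, 2*p2, p1, 0, 0;
           0, 3, 2*p2, p1, 0;
           0, 0, 3, 2*p2, p1] := by
    apply Matrix.ext
    intro i j
    fin_cases i <;> fin_cases j <;>
      norm_num [sylvesterMatrix, hf0, hf1, hf2, hf3, hg0, hg1, hg2, Fin.ext_iff]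
  rw [hM, det5]
  simp only [p0, p1, p2]
  ring
end
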